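/- (Corollary 5, global reprojection as a weighted sum.) Let X^w ∈ ℝ³ be a world point, let (R_i, t_i) be a camera with R_i ∈ SO(3) and t_i ∈ ℝ³, and let (R_j, t_j), j ∈ J, with J a finite nonempty index set, be further cameras. Set z_i := e₃ᵀ R_i (X^w − t_i) and z_j := e₃ᵀ R_j (X^w − t_j), and assume z_i > 0 and z_j > 0 for all j ∈ J. Define the noise-free observations X_i := R_i (X^w − t_i)/z_i and X_j := R_j (X^w − t_j)/z_j, the relative poses R_{ji} := R_i R_jᵀ and t_{ji} := R_i (t_j − t_i), and θ_j := (R_{ji} X_j) × X_i for each j ∈ J. Assume W := Σ_{j ∈ J} ‖θ_j‖ > 0 and set ω_j := ‖θ_j‖ / W. For each j with θ_j ≠ 0 define the two-view reprojection coordinate X^i_j := ( ‖X_i × t_{ji}‖ · R_{ji} X_j + ‖θ_j‖ · t_{ji} ) / ‖(R_{ji} X_j) × t_{ji}‖. Then the reprojection coordinate of X^w in camera i equals the weighted sum of the two-view reprojection coordinates: X_i = Σ_{j ∈ J, θ_j ≠ 0} ω_j X^i_j. -/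

import Mathlib

open Matrix Classical

/-- Euclidean norm of a vector in ℝ³. -/
noncomputable def enorm3 (v : Fin 3 → ℝ) : ℝ := Real.sqrt (v ⬝ᵥ v)

lemma enorm3_smul (c : ℝ) (v : Fin 3 → ℝ) : enorm3 (c • v) = |c| * enorm3 v := by
  unfold enorm3
  rw [smul_dotProduct, dotProduct_smul, smul_eq_mul, smul_eq_mul, ← mul_assoc,
    show c * c = c ^ 2 by ring, Real.sqrt_mul (sq_nonneg c), Real.sqrt_sq_eq_abs]

lemma enorm3_pos {v : Fin 3 → ℝ} (hv : v ≠ 0) : 0 < enorm3 v := by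
  obtain ⟨i, hi⟩ := Function.ne_iff.mp hv
  have h : 0 < v ⬝ᵥ v := by
    simp only [dotProduct]
    refine Finset.sum_pos' (fun k _ => mul_self_nonneg _) ⟨i, Finset.mem_univ i, ?_⟩
    exact mul_self_pos.mpr hi
  exact Real.sqrt_pos.mpr h

lemma enorm3_zero : enorm3 (0 : Fin 3 → ℝ) = 0 := by simp [enorm3]

/-- Corollary 5, global reprojection as a weighted sum: with noise-free
observations of a world point `Xw` in camera `i` and cameras `j ∈ J`, the reprojection
coordinate of `Xw` in camera `i` equals the weighted sum of the two-view pose-only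
reprojection coordinates over the views `j` with `θⱼ ≠ 0`. -/
theorem stmt18 {ι : Type*} (J : Finset ι) (hJ : J.Nonempty)
    (Xw : Fin 3 → ℝ)
    (Ri : Matrix (Fin 3) (Fin 3) ℝ) (ti : Fin 3 → ℝ)
    (hRi : Riᵀ * Ri = 1) (hRidet : Ri.det = 1)
    (Rj : ι → Matrix (Fin 3) (Fin 3) ℝ) (tj : ι → Fin 3 → ℝ)
    (hRj : ∀ j ∈ J, (Rj j)ᵀ * Rj j = 1) (hRjdet : ∀ j ∈ J, (Rj j).det = 1)
    (zi : ℝ) (hzi : zi = (Ri.mulVec (Xw - ti)) 2) (hzipos : 0 < zi)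
    (zj : ι → ℝ) (hzj : ∀ j ∈ J, zj j = ((Rj j).mulVec (Xw - tj j)) 2)
    (hzjpos : ∀ j ∈ J, 0 < zj j)
    (Xi : Fin 3 → ℝ) (hXi : Xi = zi⁻¹ • Ri.mulVec (Xw - ti))
    (Xj : ι → Fin 3 → ℝ) (hXj : ∀ j ∈ J, Xj j = (zj j)⁻¹ • (Rj j).mulVec (Xw - tj j))
    (Rji : ι → Matrix (Fin 3) (Fin 3) ℝ) (hRji : ∀ j ∈ J, Rji j = Ri * (Rj j)ᵀ)
    (tji : ι → Fin 3 → ℝ) (htji : ∀ j ∈ J, tji j = Ri.mulVec (tj j - ti))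
    (θ : ι → Fin 3 → ℝ) (hθ : ∀ j ∈ J, θ j = ((Rji j).mulVec (Xj j)) ⨯₃ Xi)
    (W : ℝ) (hW : W = ∑ j ∈ J, enorm3 (θ j)) (hWpos : 0 < W)
    (ω : ι → ℝ) (hω : ∀ j ∈ J, ω j = enorm3 (θ j) / W)
    (Xrep : ι → Fin 3 → ℝ)
    (hXrep : ∀ j ∈ J, θ j ≠ 0 →
      Xrep j = (enorm3 (((Rji j).mulVec (Xj j)) ⨯₃ tji j))⁻¹ •
        (enorm3 (Xi ⨯₃ tji j) • (Rji j).mulVec (Xj j) + enorm3 (θ j) • tji j)) :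
    Xi = ∑ j ∈ J.filter (fun j => θ j ≠ 0), ω j • Xrep j := by
  have hzine : zi ≠ 0 := ne_of_gt hzipos
  -- Main pointwise fact: for j ∈ J with θ j ≠ 0, Xrep j = Xi.
  have key : ∀ j ∈ J, θ j ≠ 0 → Xrep j = Xi := by
    intro j hj hθj
    set u : Fin 3 → ℝ := (Rji j).mulVec (Xj j) with hu
    have hzjne : zj j ≠ 0 := ne_of_gt (hzjpos j hj)
    -- zj j • u = Ri.mulVec (Xw - tj j)
    have hzju : zj j • u = Ri.mulVec (Xw - tj j) := by
      rw [hu, hRji j hj, hXj j hj, Matrix.mulVec_smul, smul_smul,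
        mul_inv_cancel₀ hzjne, one_smul, Matrix.mulVec_mulVec, Matrix.mul_assoc,
        hRj j hj, Matrix.mul_one]
    -- zi • Xi = Ri.mulVec (Xw - ti)
    have hziXi : zi • Xi = Ri.mulVec (Xw - ti) := by
      rw [hXi, smul_smul, mul_inv_cancel₀ hzine, one_smul]
    -- decomposition: tji j = zi • Xi - zj j • u
    have hdec : tji j = zi • Xi - zj j • u := by
      rw [hziXi, hzju, htji j hj, ← Matrix.mulVec_sub]
      congr 1
      abel
    have hθu : θ j = u ⨯₃ Xi := by rw [hθ j hj]
    -- cross products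
    have hcross1 : u ⨯₃ tji j = zi • θ j := by
      rw [hdec, hθu, map_sub, LinearMap.map_smul, LinearMap.map_smul, cross_self, smul_zero, sub_zero]
    have hcross2 : Xi ⨯₃ tji j = zj j • θ j := by
      rw [hdec, hθu, map_sub, LinearMap.map_smul, LinearMap.map_smul, cross_self, smul_zero, zero_sub,
        ← smul_neg, cross_anticomm Xi u]
    set N : ℝ := enorm3 (θ j) with hN
    have hNpos : 0 < N := enorm3_pos hθj
    have hNne : N ≠ 0 := ne_of_gt hNpos
    have e1 : enorm3 (u ⨯₃ tji j) = zi * N := by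
      rw [hcross1, enorm3_smul, abs_of_pos hzipos]
    have e2 : enorm3 (Xi ⨯₃ tji j) = zj j * N := by
      rw [hcross2, enorm3_smul, abs_of_pos (hzjpos j hj)]
    rw [hXrep j hj hθj, ← hu, e1, e2, ← hN]
    rw [hdec]
    have h3 : (zj j * N) • u + N • (zi • Xi - zj j • u) = (N * zi) • Xi := by
      module
    rw [h3, smul_smul, show (zi * N)⁻¹ * (N * zi) = 1 by field_simp, one_smul]
  -- Now the sum: ∑_{filter} ω j • Xrep j = ∑_{filter} ω j • Xi = ∑_J ω j • Xi = Xi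
  have hsum : ∑ j ∈ J.filter (fun j => θ j ≠ 0), ω j • Xrep j
      = ∑ j ∈ J, ω j • Xi := by
    rw [Finset.sum_filter]
    refine Finset.sum_congr rfl fun j hj => ?_
    by_cases h : θ j = 0
    · simp only [h, ne_eq, not_true_eq_false, if_false]
      rw [hω j hj, h, enorm3_zero, zero_div, zero_smul]
    · simp only [ne_eq, h, not_false_eq_true, if_true, key j hj h]
  rw [hsum, ← Finset.sum_smul]
  have : ∑ j ∈ J, ω j = 1 := by
    have : ∑ j ∈ J, ω j = (∑ j ∈ J, enorm3 (θ j)) / W := by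
      rw [Finset.sum_div]
      exact Finset.sum_congr rfl fun j hj => hω j hj
    rw [this, ← hW, div_self (ne_of_gt hWpos)]
  rw [this, one_smul]
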